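/- Let p, q be coprime integers with p, q ≥ 2 and let k ≥ 2. In the group G_{p,q,k} = ⟨x, y | x^p = y^q, x^{pk} = 1⟩, the element x^p is non-trivial and central; hence G_{p,q,k} has non-trivial center. -/

import Mathlib

/-- Relators for the group G_{p,q,k} = ⟨x, y | x^p = y^q, x^(pk) = 1⟩. -/
def gpqkRels (p q k : ℕ) : Set (FreeGroup (Fin 2)) :=
  {FreeGroup.of 0 ^ p * (FreeGroup.of 1 ^ q)⁻¹, FreeGroup.of 0 ^ (p * k)}

/-- The group G_{p,q,k} = ⟨x, y | x^p = y^q, x^(pk) = 1⟩. -/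
abbrev Gpqk (p q k : ℕ) := PresentedGroup (gpqkRels p q k)

theorem stmt9 (p q k : ℕ) (hp : 2 ≤ p) (hq : 2 ≤ q) (hpq : Nat.Coprime p q)
    (hk : 2 ≤ k) :
    ((PresentedGroup.of 0 : Gpqk p q k) ^ p ∈ Subgroup.center (Gpqk p q k)) ∧
    (PresentedGroup.of 0 : Gpqk p q k) ^ p ≠ 1 ∧
    Subgroup.center (Gpqk p q k) ≠ ⊥ := by
  set x : Gpqk p q k := PresentedGroup.of 0 with hx
  set y : Gpqk p q k := PresentedGroup.of 1 with hy
  -- the relation x^p = y^q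
  have hrel : x ^ p = y ^ q := by
    have hmem : (FreeGroup.of 0 ^ p * (FreeGroup.of 1 ^ q)⁻¹ : FreeGroup (Fin 2)) ∈
        Subgroup.normalClosure (gpqkRels p q k) :=
      Subgroup.subset_normalClosure (Or.inl rfl)
    have h1 : (QuotientGroup.mk (FreeGroup.of 0 ^ p * (FreeGroup.of 1 ^ q)⁻¹) :
        Gpqk p q k) = 1 := (QuotientGroup.eq_one_iff _).mpr hmem
    have : x ^ p * (y ^ q)⁻¹ = 1 := by
      simp only [QuotientGroup.mk_mul, QuotientGroup.mk_pow, QuotientGroup.mk_inv] at h1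
      exact h1
    exact mul_inv_eq_one.mp this
  -- centrality
  have hcenter : x ^ p ∈ Subgroup.center (Gpqk p q k) := by
    rw [Subgroup.mem_center_iff]
    have hcent : Subgroup.centralizer {x ^ p} = (⊤ : Subgroup (Gpqk p q k)) := by
      have hle : Subgroup.closure (Set.range (PresentedGroup.of :
          Fin 2 → Gpqk p q k)) ≤ Subgroup.centralizer {x ^ p} := by
        rw [Subgroup.closure_le]
        rintro _ ⟨i, rfl⟩
        rw [SetLike.mem_coe, Subgroup.mem_centralizer_iff]
        rintro _ rfl
        fin_cases i
        · exact (Commute.self_pow x p).symm.eq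
        · show x ^ p * y = y * x ^ p
          rw [hrel, ← pow_succ, ← pow_succ']
      exact eq_top_iff.mpr (PresentedGroup.closure_range_of (gpqkRels p q k) ▸ hle)
    intro g
    have hg : g ∈ Subgroup.centralizer {x ^ p} := by rw [hcent]; trivial
    exact (Subgroup.mem_centralizer_iff.mp hg _ rfl).symm
  have hne : x ^ p ≠ 1 := by
    -- nontriviality via a hom to ZMod (p*q*k)
    have hn : p * q * k ≠ 0 := by positivity
    haveI : NeZero (p * q * k) := ⟨hn⟩
    set f : Fin 2 → Multiplicative (ZMod (p * q * k)) :=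
      ![Multiplicative.ofAdd (q : ZMod (p * q * k)),
        Multiplicative.ofAdd (p : ZMod (p * q * k))] with hf
    have hrels : ∀ r ∈ gpqkRels p q k, FreeGroup.lift f r = 1 := by
      rintro r (rfl | rfl)
      · simp only [map_mul, map_pow, map_inv, FreeGroup.lift_apply_of, hf]
        show Multiplicative.ofAdd _ ^ p * (Multiplicative.ofAdd _ ^ q)⁻¹ = 1
        rw [← ofAdd_nsmul, ← ofAdd_nsmul, ← ofAdd_neg, ← ofAdd_add]
        rw [nsmul_eq_mul, nsmul_eq_mul]
        push_cast
        ring_nf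
        simp
      · simp only [map_pow, FreeGroup.lift_apply_of, hf]
        show Multiplicative.ofAdd _ ^ (p * k) = 1
        rw [← ofAdd_nsmul, nsmul_eq_mul]
        have : ((p : ZMod (p * q * k)) * k) * q = 0 := by
          have : ((p * k * q : ℕ) : ZMod (p * q * k)) = 0 := by
            rw [ZMod.natCast_eq_zero_iff]
            exact ⟨1, by ring⟩
          push_cast at this
          linear_combination this
        push_cast
        rw [show (p : ZMod (p*q*k)) * k * q = ((p : ZMod (p*q*k)) * k) * q from rfl, this]
        rfl
    set φ := PresentedGroup.toGroup hrels
    intro hone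
    have : φ (x ^ p) = 1 := by rw [hone]; simp
    rw [map_pow, hx, PresentedGroup.toGroup.of] at this
    have hval : (Multiplicative.ofAdd (q : ZMod (p * q * k))) ^ p = 1 := by
      simpa [hf] using this
    rw [← ofAdd_nsmul, nsmul_eq_mul] at hval
    have hzero : ((p * q : ℕ) : ZMod (p * q * k)) = 0 := by
      push_cast
      exact_mod_cast hval
    rw [ZMod.natCast_eq_zero_iff] at hzero
    have h1 : p * q * k ≤ p * q := Nat.le_of_dvd (by positivity) hzero
    have h2 : p * q * 2 ≤ p * q * k := Nat.mul_le_mul_left _ hk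
    have h3 : 0 < p * q := by positivity
    linarith
  refine ⟨hcenter, hne, fun hbot => ?_⟩
  exact hne (by simpa [hbot, Subgroup.mem_bot] using hcenter)
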